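/- arXiv:1702.01046 — 2 statements merged into one kernel-verified Lean document; each statement's English description precedes it below -/
import Mathlib

section
/- The long-term average cost of the deterministic inventory policy is finite: lim sup_{t→∞} (1/t)(∫₀ᵗ c₀(x(s)) ds + Σ_k I_{t_k ≤ t} c₁(x(t_k-), x(t_k))) ≤ 6k₁ + 9 < ∞. -/
open Filter MeasureTheory

/-- Start time `t_{i,1}` of cycle `i` (`i ≥ 1`) of the deterministic policy:
the total time of the first `i-1` cycles, `2^(i-1) + (2^((i-1)/2)-1)/(√2-1) - 1`. -/
noncomputable def cycleStart (i : ℕ) : ℝ :=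
  2 ^ (i - 1) + ((2 : ℝ) ^ (((i : ℝ) - 1) / 2) - 1) / (Real.sqrt 2 - 1) - 1

/-- Time of the `j`-th order (`1 ≤ j ≤ 2^i + 1`) of cycle `i ≥ 1`:
the first `2^(i-1)` orders (the `(0,1)` orders of Phase 1) occur at unit time
intervals; the large order and the subsequent `2^(i-1)` size-0 orders all occur
at time `t_{i,1} + 2^(i-1)`. -/
noncomputable def ordTime (i j : ℕ) : ℝ :=
  if j ≤ 2 ^ (i - 1) then cycleStart i + (j - 1 : ℕ) else cycleStart i + 2 ^ (i - 1)

/-- Size of the `j`-th order of cycle `i`: size 1 for the `2^(i-1)` Phase-1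
orders, size `2^((i-1)/2)` for the single large order, size 0 afterwards. -/
noncomputable def ordSize (i j : ℕ) : ℝ :=
  if j ≤ 2 ^ (i - 1) then 1
  else if j = 2 ^ (i - 1) + 1 then (2 : ℝ) ^ (((i : ℝ) - 1) / 2) else 0

/-- The deterministic inventory process `x(t) = -t + Σ_k 1_{t_k ≤ t} y_k`
under the cyclic policy. -/
noncomputable def invLevel (t : ℝ) : ℝ :=
  -t + ∑' i : ℕ, ∑ j ∈ Finset.Icc 1 (2 ^ (i + 1) + 1),
    if ordTime (i + 1) j ≤ t then ordSize (i + 1) j else 0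

/-! ### basic facts about √2 -/

lemma one_lt_sqrt2 : (1:ℝ) < Real.sqrt 2 := by
  rw [show (1:ℝ) = Real.sqrt 1 by simp]
  exact Real.sqrt_lt_sqrt (by norm_num) (by norm_num)

lemma sqrt2_le_two : Real.sqrt 2 ≤ 2 := by
  nlinarith [Real.sq_sqrt (by norm_num : (0:ℝ) ≤ 2), Real.sqrt_nonneg 2]

lemma sqrtpow_nonneg (n : ℕ) : (0:ℝ) ≤ Real.sqrt 2 ^ n := by positivity

lemma one_le_sqrtpow (n : ℕ) : (1:ℝ) ≤ Real.sqrt 2 ^ n :=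
  one_le_pow₀ one_lt_sqrt2.le

lemma sqrtpow_le (n : ℕ) : Real.sqrt 2 ^ n ≤ (2:ℝ) ^ n :=
  pow_le_pow_left₀ (Real.sqrt_nonneg 2) sqrt2_le_two n

lemma sqrtpow_sq (n : ℕ) : (Real.sqrt 2 ^ n) ^ 2 = (2:ℝ) ^ n := by
  rw [← pow_mul, mul_comm, pow_mul, Real.sq_sqrt (by norm_num : (0:ℝ) ≤ 2)]

lemma rpow_half_eval (i : ℕ) (hi : 1 ≤ i) :
    (2:ℝ) ^ (((i:ℝ) - 1) / 2) = Real.sqrt 2 ^ (i - 1) := by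
  have h1 : ((i:ℝ) - 1) = ((i - 1 : ℕ) : ℝ) := by
    have : ((i - 1 : ℕ) : ℝ) = (i:ℝ) - 1 := by push_cast [hi]; ring
    linarith
  rw [h1, Real.sqrt_eq_rpow, ← Real.rpow_natCast ((2:ℝ) ^ ((1:ℝ)/2)) (i-1),
    ← Real.rpow_mul (by norm_num : (0:ℝ) ≤ 2)]
  congr 1; ring

/-! ### cycleStart facts -/

lemma cycleStart_sum (i : ℕ) (hi : 1 ≤ i) :
    cycleStart i = ∑ m ∈ Finset.range (i-1), ((2:ℝ)^m + Real.sqrt 2 ^ m) := by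
  rw [Finset.sum_add_distrib, geom_sum_eq (by norm_num : (2:ℝ) ≠ 1),
    geom_sum_eq (ne_of_gt one_lt_sqrt2)]
  rw [cycleStart, rpow_half_eval i hi]
  norm_num
  ring

lemma cycleStart_one : cycleStart 1 = 0 := by
  rw [cycleStart_sum 1 le_rfl]; simp

lemma cycleStart_succ (i : ℕ) (hi : 1 ≤ i) :
    cycleStart (i+1) = cycleStart i + 2^(i-1) + Real.sqrt 2 ^ (i-1) := by
  rw [cycleStart_sum (i+1) (by omega), cycleStart_sum i hi,
    show i + 1 - 1 = (i-1) + 1 by omega, Finset.sum_range_succ]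
  ring

lemma cycleStart_nonneg (i : ℕ) (hi : 1 ≤ i) : 0 ≤ cycleStart i := by
  rw [cycleStart_sum i hi]
  exact Finset.sum_nonneg fun m _ => by positivity

lemma cycleStart_mono {i j : ℕ} (hi : 1 ≤ i) (hij : i ≤ j) :
    cycleStart i ≤ cycleStart j := by
  rw [cycleStart_sum i hi, cycleStart_sum j (by omega)]
  exact Finset.sum_le_sum_of_subset_of_nonneg
    (Finset.range_subset_range.2 (by omega)) (fun m _ _ => by positivity)

lemma cycleStart_lb (i : ℕ) (hi : 1 ≤ i) : (2:ℝ)^(i-1) - 1 ≤ cycleStart i := by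
  have h1 : (0:ℝ) ≤ (Real.sqrt 2 ^ (i-1) - 1)/(Real.sqrt 2 - 1) :=
    div_nonneg (by linarith [one_le_sqrtpow (i-1)]) (by linarith [one_lt_sqrt2])
  have h2 := rpow_half_eval i hi
  rw [cycleStart, h2]; linarith

lemma ordTime_ge (c j : ℕ) : cycleStart c ≤ ordTime c j := by
  rw [ordTime]
  split
  · have : (0:ℝ) ≤ ((j - 1 : ℕ) : ℝ) := Nat.cast_nonneg _
    linarith
  · have : (0:ℝ) ≤ (2:ℝ)^(c-1) := by positivity
    linarith

lemma ordSize_nonneg (c j : ℕ) : 0 ≤ ordSize c j := by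
  rw [ordSize]
  split
  · norm_num
  · split
    · positivity
    · exact le_refl 0
/-! ### sums of order sizes -/

lemma pow_le_pow_succ (c : ℕ) : 2^(c-1) ≤ 2^c := Nat.pow_le_pow_right (by norm_num) (by omega)

lemma sum_ind (N j : ℕ) (hj : j ≤ N) :
    ∑ j' ∈ Finset.Icc 1 N, (if j' ≤ j then (1:ℝ) else 0) = j := by
  classical
  have hfil : Finset.filter (fun j' => j' ≤ j) (Finset.Icc 1 N) = Finset.Icc 1 j := by
    ext x; simp only [Finset.mem_filter, Finset.mem_Icc]; omega
  rw [Finset.sum_ite, hfil, Finset.sum_const, Finset.sum_const_zero, Nat.card_Icc]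
  simp

lemma sum_ordSize (c : ℕ) (hc : 1 ≤ c) :
    ∑ j ∈ Finset.Icc 1 (2^c + 1), ordSize c j = 2^(c-1) + Real.sqrt 2 ^ (c-1) := by
  have hcc := pow_le_pow_succ c
  have key : ∀ j ∈ Finset.Icc 1 (2^c+1), ordSize c j =
      (if j ≤ 2^(c-1) then (1:ℝ) else 0) +
      (if j = 2^(c-1)+1 then Real.sqrt 2 ^ (c-1) else 0) := by
    intro j hj
    rw [ordSize, rpow_half_eval c hc]
    by_cases h1 : j ≤ 2^(c-1)
    · rw [if_pos h1, if_pos h1, if_neg (by omega)]; ring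
    · rw [if_neg h1, if_neg h1]
      by_cases h2 : j = 2^(c-1)+1
      · ring
      · ring
  rw [Finset.sum_congr rfl key, Finset.sum_add_distrib,
    sum_ind _ _ (by omega), Finset.sum_ite_eq' (Finset.Icc 1 (2^c+1)) (2^(c-1)+1)
      (fun _ => Real.sqrt 2 ^ (c-1)), if_pos (by simp [Finset.mem_Icc]; omega)]
  push_cast
  ring

/-! ### truncating the tsum over cycles -/

lemma tsum_cutoff (g : ℕ → ℕ → ℝ) (s : ℝ) (n : ℕ) (hs : s < cycleStart (n+1)) :
    (∑' i : ℕ, ∑ j ∈ Finset.Icc 1 (2 ^ (i + 1) + 1),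
        if ordTime (i + 1) j ≤ s then g (i + 1) j else 0)
    = ∑ m ∈ Finset.range n, ∑ j ∈ Finset.Icc 1 (2 ^ (m + 1) + 1),
        if ordTime (m + 1) j ≤ s then g (m + 1) j else 0 := by
  apply tsum_eq_sum
  intro m hm
  rw [Finset.mem_range, not_lt] at hm
  apply Finset.sum_eq_zero
  intro j hj
  rw [if_neg]
  push_neg
  calc s < cycleStart (n+1) := hs
    _ ≤ cycleStart (m+1) := cycleStart_mono (by omega) (by omega)
    _ ≤ ordTime (m+1) j := ordTime_ge _ _

/-- all the orders of cycle `c` have arrived by time `s` -/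
lemma inner_full (c : ℕ) (hc : 1 ≤ c) (s : ℝ) (hs : cycleStart c + 2^(c-1) ≤ s) :
    ∑ j ∈ Finset.Icc 1 (2^c + 1), (if ordTime c j ≤ s then ordSize c j else 0)
      = 2^(c-1) + Real.sqrt 2 ^ (c-1) := by
  rw [← sum_ordSize c hc]
  apply Finset.sum_congr rfl
  intro j hj
  rw [if_pos]
  rw [ordTime]
  split
  · rename_i h
    have h1 : ((j - 1 : ℕ) : ℝ) ≤ (2:ℝ)^(c-1) := by
      calc ((j - 1 : ℕ) : ℝ) ≤ ((2^(c-1) : ℕ) : ℝ) := Nat.cast_le.2 (by omega)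
        _ = (2:ℝ)^(c-1) := by push_cast; ring
    linarith
  · exact hs

/-- the total of all orders in cycles `1..i-1` is `cycleStart i`. -/
lemma prefix_full (i : ℕ) (hi : 1 ≤ i) (s : ℝ) (hs : cycleStart i ≤ s) :
    ∑ m ∈ Finset.range (i-1), ∑ j ∈ Finset.Icc 1 (2 ^ (m + 1) + 1),
        (if ordTime (m + 1) j ≤ s then ordSize (m + 1) j else 0) = cycleStart i := by
  have key : ∀ m ∈ Finset.range (i-1),
      ∑ j ∈ Finset.Icc 1 (2 ^ (m + 1) + 1),
        (if ordTime (m + 1) j ≤ s then ordSize (m + 1) j else 0)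
      = (2:ℝ)^m + Real.sqrt 2 ^ m := by
    intro m hm
    rw [Finset.mem_range] at hm
    have h1 : cycleStart (m+1) + 2^(m+1-1) ≤ s := by
      have h2 := cycleStart_succ (m+1) (by omega)
      have h3 : cycleStart (m+1+1) ≤ cycleStart i := cycleStart_mono (by omega) (by omega)
      have h4 := sqrtpow_nonneg m
      simp only [Nat.add_sub_cancel] at h2 ⊢
      linarith
    have := inner_full (m+1) (by omega) s h1
    simp only [Nat.add_sub_cancel] at this
    exact this
  rw [Finset.sum_congr rfl key, ← cycleStart_sum i hi]

/-! ### evaluation of invLevel -/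

lemma invLevel_phase1 (i : ℕ) (hi : 1 ≤ i) (j : ℕ) (hj1 : 1 ≤ j) (hj2 : j ≤ 2^(i-1)) (s : ℝ)
    (h1 : cycleStart i + ((j - 1 : ℕ) : ℝ) ≤ s) (h2 : s < cycleStart i + j) :
    invLevel s = cycleStart i + j - s := by
  have hj2R : (j:ℝ) ≤ (2:ℝ)^(i-1) := by
    calc (j:ℝ) ≤ ((2^(i-1) : ℕ) : ℝ) := Nat.cast_le.2 hj2
      _ = (2:ℝ)^(i-1) := by push_cast; ring
  have hlt : s < cycleStart (i+1) := by
    have h3 := cycleStart_succ i hi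
    have h4 := sqrtpow_nonneg (i-1)
    linarith
  rw [invLevel, tsum_cutoff (fun c j => ordSize c j) s i hlt]
  obtain ⟨i', rfl⟩ : ∃ i', i = i' + 1 := ⟨i - 1, by omega⟩
  simp only [Nat.add_sub_cancel] at hj2 hj2R h1 h2 ⊢
  have hp := prefix_full (i'+1) (by omega) s (by
    have h0 : (0:ℝ) ≤ ((j-1:ℕ):ℝ) := Nat.cast_nonneg _
    linarith)
  simp only [Nat.add_sub_cancel] at hp
  rw [Finset.sum_range_succ, hp]
  have hlast : ∑ j' ∈ Finset.Icc 1 (2 ^ (i' + 1) + 1),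
      (if ordTime (i' + 1) j' ≤ s then ordSize (i' + 1) j' else 0) = (j:ℝ) := by
    have key : ∀ j' ∈ Finset.Icc 1 (2 ^ (i' + 1) + 1),
        (if ordTime (i' + 1) j' ≤ s then ordSize (i' + 1) j' else 0)
        = if j' ≤ j then (1:ℝ) else 0 := by
      intro j' hj'
      rw [Finset.mem_Icc] at hj'
      rw [ordTime, ordSize]
      simp only [Nat.add_sub_cancel]
      by_cases hc : j' ≤ 2^i'
      · rw [if_pos hc, if_pos hc]
        by_cases hcc : j' ≤ j
        · rw [if_pos, if_pos hcc]
          have : ((j'-1:ℕ):ℝ) ≤ ((j-1:ℕ):ℝ) := Nat.cast_le.2 (by omega)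
          linarith
        · rw [if_neg, if_neg hcc]
          push_neg
          have : (j:ℝ) ≤ ((j'-1:ℕ):ℝ) := by
            calc (j:ℝ) = ((j:ℕ):ℝ) := by norm_num
              _ ≤ ((j'-1:ℕ):ℝ) := Nat.cast_le.2 (by omega)
          linarith
      · rw [if_neg hc, if_neg hc, if_neg (by
          push_neg
          linarith), if_neg (by omega)]
    rw [Finset.sum_congr rfl key, sum_ind _ j (by have := pow_le_pow_succ (i'+1); simp only [Nat.add_sub_cancel] at this; omega)]
  rw [hlast]
  ring

lemma invLevel_phase2 (i : ℕ) (hi : 1 ≤ i) (s : ℝ)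
    (h1 : cycleStart i + (2:ℝ)^(i-1) ≤ s) (h2 : s < cycleStart (i+1)) :
    invLevel s = cycleStart (i+1) - s := by
  rw [invLevel, tsum_cutoff (fun c j => ordSize c j) s i h2]
  obtain ⟨i', rfl⟩ : ∃ i', i = i' + 1 := ⟨i - 1, by omega⟩
  simp only [Nat.add_sub_cancel] at h1 ⊢
  have hp := prefix_full (i'+1) (by omega) s (by
      have : (0:ℝ) ≤ (2:ℝ)^i' := by positivity
      linarith)
  simp only [Nat.add_sub_cancel] at hp
  rw [Finset.sum_range_succ, hp]
  have := inner_full (i'+1) (by omega) s (by simp only [Nat.add_sub_cancel]; exact h1)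
  simp only [Nat.add_sub_cancel] at this
  rw [this, cycleStart_succ (i'+1) (by omega)]
  simp only [Nat.add_sub_cancel]
  ring
/-! ### integral over one linear piece -/

lemma piece (a b : ℝ) (hab : a ≤ b) (h : ∀ s ∈ Set.Ico a b, invLevel s = b - s) :
    IntervalIntegrable (fun s => 2 * |invLevel s|) volume a b ∧
      ∫ s in a..b, 2 * |invLevel s| = (b - a)^2 := by
  set g : ℝ → ℝ := fun s => 2 * |b - s| with hg
  have hgc : Continuous g := by fun_prop
  have hae : (fun s => 2 * |invLevel s|) =ᵐ[volume.restrict (Set.uIoc a b)] g := by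
    rw [Set.uIoc_of_le hab]
    have h1 : ∀ᵐ x ∂(volume.restrict (Set.Ioc a b)), x ∈ Set.Ioc a b :=
      ae_restrict_mem measurableSet_Ioc
    have h2 : ∀ᵐ x ∂(volume.restrict (Set.Ioc a b)), x ≠ b := by
      refine ae_restrict_of_ae ?_
      rw [MeasureTheory.ae_iff]
      have : {x : ℝ | ¬ x ≠ b} = {b} := by ext x; simp
      rw [this]
      exact Real.volume_singleton
    filter_upwards [h1, h2] with x hx1 hx2
    rw [hg]
    simp only
    rw [h x ⟨hx1.1.le, lt_of_le_of_ne hx1.2 hx2⟩]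
  have hgint : IntervalIntegrable g volume a b := hgc.intervalIntegrable a b
  refine ⟨hgint.congr_ae hae.symm, ?_⟩
  rw [intervalIntegral.integral_congr_ae ((ae_restrict_iff' measurableSet_uIoc).1 hae)]
  have heq : ∀ s ∈ Set.uIcc a b, g s = 2*(b - s) := by
    intro s hs
    rw [Set.uIcc_of_le hab] at hs
    rw [hg]
    simp only
    rw [abs_of_nonneg (by linarith [hs.2])]
  rw [intervalIntegral.integral_congr heq]
  have h1 : IntervalIntegrable (fun _ : ℝ => b) volume a b := intervalIntegrable_const
  have h2 : IntervalIntegrable (fun s : ℝ => s) volume a b :=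
    intervalIntegral.intervalIntegrable_id
  simp only [mul_sub]
  rw [intervalIntegral.integral_sub (h1.const_mul 2) (h2.const_mul 2),
    intervalIntegral.integral_const_mul, intervalIntegral.integral_const_mul,
    integral_id, intervalIntegral.integral_const]
  simp only [smul_eq_mul]
  ring

/-! ### integral over phase 1 of cycle i -/

lemma phase1_int (i : ℕ) (hi : 1 ≤ i) : ∀ j : ℕ, j ≤ 2^(i-1) →
    IntervalIntegrable (fun s => 2 * |invLevel s|) volume (cycleStart i) (cycleStart i + j) ∧
    ∫ s in (cycleStart i)..(cycleStart i + j), 2 * |invLevel s| = j := by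
  intro j
  induction j with
  | zero =>
    intro _
    constructor
    · simp only [Nat.cast_zero, add_zero]
      exact IntervalIntegrable.refl
    · simp
  | succ j ih =>
    intro hj
    obtain ⟨ihint, ihval⟩ := ih (by omega)
    have hco : ((j:ℝ) + 1) = ((j + 1 : ℕ) : ℝ) := by push_cast; ring
    have hpiece := piece (cycleStart i + j) (cycleStart i + ((j+1:ℕ):ℝ))
      (by push_cast; linarith)
      (fun s hs => by
        have e1 : cycleStart i + (((j+1) - 1 : ℕ) : ℝ) ≤ s := by
          simpa using hs.1
        have e2 : s < cycleStart i + ((j+1:ℕ):ℝ) := hs.2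
        exact invLevel_phase1 i hi (j+1) (by omega) hj s e1 e2)
    refine ⟨?_, ?_⟩
    · exact ihint.trans hpiece.1
    · rw [← intervalIntegral.integral_add_adjacent_intervals ihint hpiece.1, ihval, hpiece.2]
      push_cast
      ring

/-! ### integral over a full cycle -/

lemma cycle_int (i : ℕ) (hi : 1 ≤ i) :
    IntervalIntegrable (fun s => 2 * |invLevel s|) volume (cycleStart i) (cycleStart (i+1)) ∧
    ∫ s in (cycleStart i)..(cycleStart (i+1)), 2 * |invLevel s| = 2 * (2:ℝ)^(i-1) := by
  obtain ⟨h1int, h1val⟩ := phase1_int i hi (2^(i-1)) le_rfl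
  have hcast : (((2:ℕ)^(i-1) : ℕ) : ℝ) = (2:ℝ)^(i-1) := by push_cast; ring
  have hsucc := cycleStart_succ i hi
  have hs0 := sqrtpow_nonneg (i-1)
  have hab : cycleStart i + (((2:ℕ)^(i-1) : ℕ) : ℝ) ≤ cycleStart (i+1) := by
    rw [hcast]; linarith
  have hpiece := piece (cycleStart i + (((2:ℕ)^(i-1) : ℕ) : ℝ)) (cycleStart (i+1)) hab
    (fun s hs => invLevel_phase2 i hi s (by rw [hcast] at hs; exact hs.1) hs.2)
  refine ⟨h1int.trans hpiece.1, ?_⟩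
  rw [← intervalIntegral.integral_add_adjacent_intervals h1int hpiece.1, h1val, hpiece.2]
  have e1 : cycleStart (i+1) - (cycleStart i + (((2:ℕ)^(i-1) : ℕ) : ℝ)) = Real.sqrt 2 ^ (i-1) := by
    rw [hcast]; linarith
  rw [e1, sqrtpow_sq, hcast]
  ring

/-! ### total integral from 0 to cycleStart (n+1) -/

lemma total_int (n : ℕ) :
    IntervalIntegrable (fun s => 2 * |invLevel s|) volume 0 (cycleStart (n+1)) ∧
    ∫ s in (0:ℝ)..(cycleStart (n+1)), 2 * |invLevel s| = ∑ m ∈ Finset.range n, 2 * (2:ℝ)^m := by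
  induction n with
  | zero =>
    rw [cycleStart_one]
    exact ⟨IntervalIntegrable.refl, by simp⟩
  | succ n ih =>
    obtain ⟨ihint, ihval⟩ := ih
    obtain ⟨cint, cval⟩ := cycle_int (n+1) (by omega)
    simp only [Nat.add_sub_cancel] at cint cval ⊢
    refine ⟨ihint.trans cint, ?_⟩
    rw [← intervalIntegral.integral_add_adjacent_intervals ihint cint, ihval, cval,
      Finset.sum_range_succ]
/-! ### arithmetic helpers -/

lemma nat_ineq1 (n : ℕ) (hn : 5 ≤ n) : (n:ℝ) + 6 ≤ (2:ℝ)^n := by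
  have hN : n + 6 ≤ 2^n := by
    induction n, hn using Nat.le_induction with
    | base => norm_num
    | succ k hk ih =>
      have h2 : 2^(k+1) = 2*2^k := by ring
      omega
  have := (Nat.cast_le (α := ℝ)).2 hN
  push_cast at this
  linarith

lemma nat_ineq2 (n : ℕ) (hn : 5 ≤ n) : (9:ℝ) ≤ (2:ℝ)^(n-1) := by
  have hN : 2^4 ≤ 2^(n-1) := Nat.pow_le_pow_right (by norm_num) (by omega)
  have := (Nat.cast_le (α := ℝ)).2 hN
  push_cast at this
  linarith

/-! ### the main theorem -/

/-- The long-term average cost of the deterministic cyclic inventory policy is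
finite: with holding cost rate `c₀(x) = 2|x|` and ordering cost
`c₁(y,z) = k₁ + (z-y)`, `k₁ > 0`,
`limsup_{t→∞} (1/t)(∫₀ᵗ c₀(x(s)) ds + Σ_k 1_{t_k ≤ t} c₁(x(t_k-), x(t_k))) ≤ 6k₁ + 9 < ∞`. -/
theorem deterministic_lta_cost_finite (k₁ : ℝ) (hk₁ : 0 < k₁) :
    Filter.limsup
      (fun t : ℝ =>
        (1 / t) * ((∫ s in (0:ℝ)..t, 2 * |invLevel s|)
          + ∑' i : ℕ, ∑ j ∈ Finset.Icc 1 (2 ^ (i + 1) + 1),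
              if ordTime (i + 1) j ≤ t then k₁ + ordSize (i + 1) j else 0))
      Filter.atTop ≤ 6 * k₁ + 9 := by
  classical
  have hev : ∀ᶠ t in atTop,
      (1 / t) * ((∫ s in (0:ℝ)..t, 2 * |invLevel s|)
          + ∑' i : ℕ, ∑ j ∈ Finset.Icc 1 (2 ^ (i + 1) + 1),
              if ordTime (i + 1) j ≤ t then k₁ + ordSize (i + 1) j else 0)
        ≤ 6 * k₁ + 9 := by
    rw [eventually_atTop]
    refine ⟨cycleStart 5, fun t ht => ?_⟩
    have h15 : (15:ℝ) ≤ cycleStart 5 := by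
      have := cycleStart_lb 5 (by norm_num)
      norm_num at this
      linarith
    have ht0 : (0:ℝ) < t := by linarith
    have hex : ∃ m : ℕ, t < cycleStart (m+1) := by
      obtain ⟨m, hm⟩ := pow_unbounded_of_one_lt (t+1) (by norm_num : (1:ℝ) < 2)
      refine ⟨m, ?_⟩
      have := cycleStart_lb (m+1) (by omega)
      simp only [Nat.add_sub_cancel] at this
      linarith
    set n := Nat.find hex with hn_def
    have hn1 : t < cycleStart (n+1) := Nat.find_spec hex
    have hn5 : 5 ≤ n := by
      by_contra hcon
      push_neg at hcon
      have : cycleStart (n+1) ≤ cycleStart 5 := cycleStart_mono (by omega) (by omega)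
      linarith
    have hn2 : cycleStart n ≤ t := by
      have hmin := Nat.find_min hex (m := n - 1) (by omega)
      push_neg at hmin
      have heq : n - 1 + 1 = n := by omega
      rwa [heq] at hmin
    -- integral bound
    obtain ⟨Hint, Hval⟩ := total_int n
    have htT : t ≤ cycleStart (n+1) := hn1.le
    have ht0' : (0:ℝ) ≤ t := ht0.le
    have hsub1 : IntervalIntegrable (fun s => 2*|invLevel s|) volume 0 t :=
      Hint.mono_set (by
        rw [Set.uIcc_of_le ht0', Set.uIcc_of_le (le_trans ht0' htT)]
        exact Set.Icc_subset_Icc le_rfl htT)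
    have hsub2 : IntervalIntegrable (fun s => 2*|invLevel s|) volume t (cycleStart (n+1)) :=
      Hint.mono_set (by
        rw [Set.uIcc_of_le htT, Set.uIcc_of_le (le_trans ht0' htT)]
        exact Set.Icc_subset_Icc ht0' le_rfl)
    have hHle : ∫ s in (0:ℝ)..t, 2*|invLevel s| ≤ (2:ℝ)^(n+1) := by
      have hadd := intervalIntegral.integral_add_adjacent_intervals hsub1 hsub2
      have hnn : 0 ≤ ∫ s in t..(cycleStart (n+1)), 2*|invLevel s| :=
        intervalIntegral.integral_nonneg htT (fun u _ => by positivity)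
      have hsum2 : ∑ m ∈ Finset.range n, 2*(2:ℝ)^m = 2*((2:ℝ)^n - 1) := by
        rw [← Finset.mul_sum, geom_sum_eq (by norm_num : (2:ℝ) ≠ 1)]
        norm_num
      rw [Hval] at hadd
      rw [hsum2] at hadd
      have h2n : (2:ℝ)^(n+1) = 2*2^n := by ring
      linarith
    -- order cost bound
    have hO : (∑' i : ℕ, ∑ j ∈ Finset.Icc 1 (2 ^ (i + 1) + 1),
          if ordTime (i + 1) j ≤ t then k₁ + ordSize (i + 1) j else 0)
        ≤ k₁ * ((2:ℝ)^(n+1) + n) + (2:ℝ)^(n+1) := by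
      rw [tsum_cutoff (fun c j => k₁ + ordSize c j) t n hn1]
      have hbd : ∀ m ∈ Finset.range n, (∑ j ∈ Finset.Icc 1 (2 ^ (m + 1) + 1),
          if ordTime (m + 1) j ≤ t then k₁ + ordSize (m + 1) j else 0)
          ≤ k₁ * ((2:ℝ)^(m+1) + 1) + 2*(2:ℝ)^m := by
        intro m hm
        have step1 : (∑ j ∈ Finset.Icc 1 (2 ^ (m + 1) + 1),
            if ordTime (m + 1) j ≤ t then k₁ + ordSize (m + 1) j else 0)
            ≤ ∑ j ∈ Finset.Icc 1 (2 ^ (m + 1) + 1), (k₁ + ordSize (m+1) j) := by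
          apply Finset.sum_le_sum
          intro j hj
          split
          · exact le_rfl
          · have := ordSize_nonneg (m+1) j; linarith
        have step2 : ∑ j ∈ Finset.Icc 1 (2 ^ (m + 1) + 1), (k₁ + ordSize (m+1) j)
            = ((2:ℝ)^(m+1) + 1) * k₁ + ((2:ℝ)^m + Real.sqrt 2 ^ m) := by
          rw [Finset.sum_add_distrib, Finset.sum_const, Nat.card_Icc]
          have hso := sum_ordSize (m+1) (by omega)
          simp only [Nat.add_sub_cancel] at hso
          rw [hso]
          simp only [nsmul_eq_mul]
          push_cast
          ring
        have hsq := sqrtpow_le m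
        calc (∑ j ∈ Finset.Icc 1 (2 ^ (m + 1) + 1),
            if ordTime (m + 1) j ≤ t then k₁ + ordSize (m + 1) j else 0)
            ≤ ((2:ℝ)^(m+1) + 1) * k₁ + ((2:ℝ)^m + Real.sqrt 2 ^ m) := by rw [← step2]; exact step1
          _ ≤ k₁ * ((2:ℝ)^(m+1) + 1) + 2*(2:ℝ)^m := by linarith [mul_comm ((2:ℝ)^(m+1) + 1) k₁]
      have hsA : ∑ m ∈ Finset.range n, (2:ℝ)^m = (2:ℝ)^n - 1 := by
        rw [geom_sum_eq (by norm_num : (2:ℝ) ≠ 1)]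
        norm_num
      have hsum3 : ∑ m ∈ Finset.range n, (k₁ * ((2:ℝ)^(m+1) + 1) + 2*(2:ℝ)^m)
          = k₁ * (2*((2:ℝ)^n - 1) + n) + 2*((2:ℝ)^n - 1) := by
        have e1 : ∀ m : ℕ, k₁ * ((2:ℝ)^(m+1) + 1) + 2*(2:ℝ)^m
            = (k₁*2 + 2)*(2:ℝ)^m + k₁ := fun m => by ring
        simp only [e1]
        rw [Finset.sum_add_distrib, ← Finset.mul_sum, hsA, Finset.sum_const,
          Finset.card_range, nsmul_eq_mul]
        ring
      calc (∑ m ∈ Finset.range n, ∑ j ∈ Finset.Icc 1 (2 ^ (m + 1) + 1),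
            if ordTime (m + 1) j ≤ t then k₁ + ordSize (m + 1) j else 0)
          ≤ ∑ m ∈ Finset.range n, (k₁ * ((2:ℝ)^(m+1) + 1) + 2*(2:ℝ)^m) := Finset.sum_le_sum hbd
        _ = k₁ * (2*((2:ℝ)^n - 1) + n) + 2*((2:ℝ)^n - 1) := hsum3
        _ ≤ k₁ * ((2:ℝ)^(n+1) + n) + (2:ℝ)^(n+1) := by
            have h2n : (2:ℝ)^(n+1) = 2*2^n := by ring
            have hA : 2*((2:ℝ)^n - 1) + n ≤ (2:ℝ)^(n+1) + n := by linarith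
            have := mul_le_mul_of_nonneg_left hA hk₁.le
            linarith
    -- combine
    have hlbt : (2:ℝ)^(n-1) - 1 ≤ t := le_trans (by linarith [cycleStart_lb n (by omega)]) hn2
    have hi1 := nat_ineq1 n hn5
    have hi2 := nat_ineq2 n hn5
    have hpow : (2:ℝ)^(n+1) = 4*(2:ℝ)^(n-1) := by
      rw [show n+1 = (n-1)+2 by omega]
      ring
    have h2n : (2:ℝ)^n = 2*(2:ℝ)^(n-1) := by
      have hh : (2:ℝ)^((n-1)+1) = 2 * (2:ℝ)^(n-1) := by ring
      rw [show (n-1)+1 = n by omega] at hh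
      linarith
    have key : k₁*((2:ℝ)^(n+1)+n) + (2:ℝ)^(n+1) + (2:ℝ)^(n+1) ≤ (6*k₁+9)*((2:ℝ)^(n-1)-1) := by
      have hA : (2:ℝ)^(n+1) + n ≤ 6*(2:ℝ)^(n-1) - 6 := by
        rw [hpow]
        linarith
      have hB := mul_le_mul_of_nonneg_left hA hk₁.le
      nlinarith [hB, hi2]
    have hmul : (6*k₁+9)*((2:ℝ)^(n-1)-1) ≤ (6*k₁+9)*t :=
      mul_le_mul_of_nonneg_left hlbt (by linarith)
    have hcost : (∫ s in (0:ℝ)..t, 2 * |invLevel s|)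
          + (∑' i : ℕ, ∑ j ∈ Finset.Icc 1 (2 ^ (i + 1) + 1),
              if ordTime (i + 1) j ≤ t then k₁ + ordSize (i + 1) j else 0)
        ≤ (6*k₁+9)*t := by linarith
    have hfin := mul_le_mul_of_nonneg_left hcost (by positivity : (0:ℝ) ≤ 1/t)
    calc (1 / t) * ((∫ s in (0:ℝ)..t, 2 * |invLevel s|)
          + ∑' i : ℕ, ∑ j ∈ Finset.Icc 1 (2 ^ (i + 1) + 1),
              if ordTime (i + 1) j ≤ t then k₁ + ordSize (i + 1) j else 0)
        ≤ (1/t) * ((6*k₁+9)*t) := hfin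
      _ = 6*k₁+9 := by field_simp
  have hnn : ∀ᶠ t in atTop,
      (0:ℝ) ≤ (1 / t) * ((∫ s in (0:ℝ)..t, 2 * |invLevel s|)
          + ∑' i : ℕ, ∑ j ∈ Finset.Icc 1 (2 ^ (i + 1) + 1),
              if ordTime (i + 1) j ≤ t then k₁ + ordSize (i + 1) j else 0) := by
    rw [eventually_atTop]
    refine ⟨1, fun t ht => ?_⟩
    have ht0 : (0:ℝ) < t := by linarith
    apply mul_nonneg (by positivity)
    apply add_nonneg
    · exact intervalIntegral.integral_nonneg ht0.le (fun u _ => by positivity)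
    · apply tsum_nonneg
      intro i
      apply Finset.sum_nonneg
      intro j hj
      split
      · have := ordSize_nonneg (i+1) j; linarith
      · exact le_rfl
  exact Filter.limsup_le_of_le (isCoboundedUnder_le_of_eventually_le atTop hnn) hev
end

section
/- Let (L_k)_{k≥1} be nonnegative numbers indexed so that, writing k = 2^(i-1)+i+j-2 with i ≥ 1 and 1 ≤ j ≤ 2^(i-1), L_k = 2, and L_{2^i+i-1} = 2^(i-1) + 2^((i-1)/2) for i ≥ 1. Then lim sup_{n→∞} (1/n)Σ_{k=1}^n L_k ≤ 3. -/
open Filter Topology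

private lemma rpow_half_eq' (m : ℕ) : (2:ℝ) ^ ((m:ℝ)/2) = (Real.sqrt 2)^m := by
  rw [Real.sqrt_eq_rpow, ← Real.rpow_natCast ((2:ℝ) ^ ((1:ℝ)/2)) m,
    ← Real.rpow_mul (by norm_num)]
  ring_nf

private lemma geom_bound' (m : ℕ) :
    ∑ i ∈ Finset.range m, (Real.sqrt 2)^i ≤ 2.5 * (Real.sqrt 2)^m := by
  set s := Real.sqrt 2 with hs
  have h14 : (1.4:ℝ) ≤ s := Real.le_sqrt_of_sq_le (by norm_num)
  have hs1 : (1:ℝ) ≤ s := by linarith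
  have hne : s ≠ 1 := by intro h; rw [h] at h14; norm_num at h14
  rw [geom_sum_eq hne, div_le_iff₀ (by linarith)]
  have hpow : (1:ℝ) ≤ s ^ m := one_le_pow₀ hs1
  have hsucc : s ^ (m+1) = s * s ^ m := by ring
  nlinarith [pow_nonneg (by linarith : (0:ℝ) ≤ s) m]

private lemma sqrt_tendsto' : Tendsto (fun n : ℕ => Real.sqrt n) atTop atTop := by
  rw [tendsto_atTop_atTop]
  intro b
  refine ⟨⌈b^2⌉₊, fun n hn => ?_⟩
  apply Real.le_sqrt_of_sq_le
  calc b^2 ≤ (⌈b^2⌉₊ : ℝ) := Nat.le_ceil _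
    _ ≤ n := by exact_mod_cast hn

/-- Let `L_k ≥ 0` be the expected holding costs of the inter-order intervals of
the stochastic inventory policy: writing `k = 2^(i-1)+i+j-2` with `i ≥ 1` and
`1 ≤ j ≤ 2^(i-1)`, `L_k = 2` (the `(0,1)` sub-cycles), while
`L_{2^i+i-1} = 2^(i-1) + 2^((i-1)/2)` (the large sub-cycle of cycle `i`).
Then `limsup_{n→∞} (1/n) Σ_{k=1}^n L_k ≤ 3`. -/
theorem holding_cost_cesaro_limsup_le_three
    (L : ℕ → ℝ) (hnonneg : ∀ k, 0 ≤ L k)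
    (hsmall : ∀ i j : ℕ, 1 ≤ i → 1 ≤ j → j ≤ 2 ^ (i - 1) →
      L (2 ^ (i - 1) + i + j - 2) = 2)
    (hbig : ∀ i : ℕ, 1 ≤ i →
      L (2 ^ i + i - 1) = 2 ^ (i - 1) + (2 : ℝ) ^ (((i : ℝ) - 1) / 2)) :
    Filter.limsup
      (fun n : ℕ => (1 / (n : ℝ)) * ∑ k ∈ Finset.Icc 1 n, L k) Filter.atTop ≤ 3 := by
  classical
  set s : ℝ := Real.sqrt 2 with hs
  set S : ℕ → ℝ := fun n => ∑ k ∈ Finset.Icc 1 n, L k with hSdef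
  set T : ℕ → ℝ := fun m => ∑ i ∈ Finset.range m, s^i with hTdef
  have hp2 : ∀ m : ℕ, 1 ≤ 2^m := fun m => Nat.one_le_two_pow
  have hsucc2 : ∀ m : ℕ, (2:ℕ)^(m+1) = 2*2^m := fun m => by rw [pow_succ]; ring
  have hIoc : ∀ n : ℕ, Finset.Icc 1 n = Finset.Ioc 0 n := fun n => Finset.Icc_add_one_left_eq_Ioc 0 n
  -- small values
  have key : ∀ m k : ℕ, 2^m + m ≤ k → k ≤ 2*2^m + m - 1 → L k = 2 := by
    intro m k h1 h2
    have hp := hp2 m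
    have h := hsmall (m+1) (k - (2^m+m-1)) (by omega) (by omega)
      (by simp only [Nat.add_sub_cancel]; omega)
    rwa [show 2^((m+1)-1) + (m+1) + (k - (2^m+m-1)) - 2 = k by
      simp only [Nat.add_sub_cancel]; omega] at h
  -- big values
  have keyB : ∀ m : ℕ, L (2*2^m + m) = (2:ℝ)^m + s^m := by
    intro m
    have h := hbig (m+1) (by omega)
    rw [show 2^(m+1) + (m+1) - 1 = 2*2^m + m by rw [hsucc2]; omega] at h
    rw [h, Nat.add_sub_cancel]
    congr 1
    rw [show ((m+1 : ℕ) : ℝ) - 1 = (m:ℝ) by push_cast; ring, rpow_half_eq']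
  -- sums of constant blocks
  have blocksum : ∀ a b : ℕ, (∀ k, a < k → k ≤ b → L k = 2) →
      ∑ k ∈ Finset.Ioc a b, L k = 2*((b - a : ℕ) : ℝ) := by
    intro a b hall
    have hcongr : ∑ k ∈ Finset.Ioc a b, L k = ∑ _k ∈ Finset.Ioc a b, (2:ℝ) :=
      Finset.sum_congr rfl (fun k hk => by
        rw [Finset.mem_Ioc] at hk; exact hall k hk.1 hk.2)
    rw [hcongr, Finset.sum_const, Nat.card_Ioc, nsmul_eq_mul]
    ring
  -- main induction on cycles
  have main : ∀ m : ℕ, 1 ≤ m → S (2^m + m - 1) ≤ 3*(2:ℝ)^m + T m := by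
    intro m hm
    induction m, hm using Nat.le_induction with
    | base =>
      have h1 : L 1 = 2 := by
        have := hsmall 1 1 le_rfl le_rfl (by norm_num)
        norm_num at this; exact this
      have h2 : L 2 = 2 := by
        have h := hbig 1 le_rfl
        norm_num at h
        exact h
      have hset : Finset.Icc 1 (2^1+1-1) = ({1, 2} : Finset ℕ) := by decide
      simp only [hSdef, hTdef, hset]
      rw [Finset.sum_pair (by norm_num), h1, h2, Finset.sum_range_one]
      norm_num
    | succ m hm ih =>
      have hp := hp2 m
      have hidx : 2^(m+1)+(m+1)-1 = 2*2^m + m := by rw [hsucc2]; omega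
      have e1 : ∑ k ∈ Finset.Ioc 0 (2^m+m-1), L k
          + ∑ k ∈ Finset.Ioc (2^m+m-1) (2*2^m+m-1), L k
          = ∑ k ∈ Finset.Ioc 0 (2*2^m+m-1), L k :=
        Finset.sum_Ioc_consecutive L (by omega) (by omega)
      have e2 : ∑ k ∈ Finset.Ioc 0 (2*2^m+m-1+1), L k
          = ∑ k ∈ Finset.Ioc 0 (2*2^m+m-1), L k + L (2*2^m+m-1+1) :=
        Finset.sum_Ioc_succ_top (by omega) L
      have hblock : ∑ k ∈ Finset.Ioc (2^m+m-1) (2*2^m+m-1), L k = 2*((2^m : ℕ) : ℝ) := by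
        rw [blocksum _ _ (fun k hk1 hk2 => key m k (by omega) hk2),
          show 2*2^m+m-1 - (2^m+m-1) = 2^m by omega]
      have hS1 : S (2^(m+1)+(m+1)-1) = S (2^m+m-1) + 2*((2^m : ℕ) : ℝ) + ((2:ℝ)^m + s^m) := by
        simp only [hSdef, hIoc]
        rw [hidx, show 2*2^m+m = 2*2^m+m-1+1 by omega, e2, ← e1, hblock,
          show 2*2^m+m-1+1 = 2*2^m+m by omega, keyB m]
      have hT1 : T (m+1) = T m + s^m := Finset.sum_range_succ _ _
      rw [hS1, hT1]
      have hcast : ((2^m : ℕ) : ℝ) = (2:ℝ)^m := by push_cast; ring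
      rw [hcast, pow_succ]
      linarith [ih]
  -- every n ≥ 2 lies in some cycle
  have cover : ∀ n : ℕ, 2 ≤ n → ∃ m : ℕ, 1 ≤ m ∧ 2^m+m-1 ≤ n ∧ n ≤ 2^(m+1)+(m+1)-1 := by
    intro n hn
    induction n, hn using Nat.le_induction with
    | base => exact ⟨1, le_rfl, by norm_num, by norm_num⟩
    | succ n hn ih =>
      obtain ⟨m, hm, h1, h2⟩ := ih
      rcases Nat.lt_or_ge n (2^(m+1)+(m+1)-1) with h | h
      · exact ⟨m, hm, by omega, by omega⟩
      · refine ⟨m+1, by omega, by omega, ?_⟩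
        have := hp2 (m+1)
        rw [hsucc2 (m+1)]
        omega
  -- sqrt comparison
  have hsqrt : ∀ j n : ℕ, (2:ℕ)^j ≤ n → s^j ≤ Real.sqrt n := by
    intro j n hj
    apply Real.le_sqrt_of_sq_le
    have h1 : (s^j)^2 = (2:ℝ)^j := by
      rw [← pow_mul, mul_comm, pow_mul, hs, Real.sq_sqrt (by norm_num)]
    rw [h1]
    calc (2:ℝ)^j = ((2^j : ℕ) : ℝ) := by push_cast; ring
      _ ≤ (n : ℝ) := by exact_mod_cast hj
  have hgoal : Filter.limsup
      (fun n : ℕ => (1 / (n : ℝ)) * ∑ k ∈ Finset.Icc 1 n, L k) Filter.atTop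
      = Filter.limsup (fun n : ℕ => (1 / (n : ℝ)) * S n) Filter.atTop := rfl
  -- the key pointwise bound
  have Sbound : ∀ n : ℕ, 2 ≤ n → S n ≤ 3*(n:ℝ) + 2 + 2.5 * Real.sqrt n := by
    intro n hn
    obtain ⟨m, hm, h1, h2⟩ := cover n hn
    have hp := hp2 m
    have hq := hsucc2 m
    have hTm : T m ≤ 2.5 * s^m := geom_bound' m
    have hTm1 : T (m+1) ≤ 2.5 * s^(m+1) := geom_bound' (m+1)
    rcases Nat.lt_or_ge n (2^(m+1)+(m+1)-1) with hlt | hge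
    · -- strictly inside the cycle: only small values after the last big one
      rw [hq] at hlt
      have e1 : ∑ k ∈ Finset.Ioc 0 (2^m+m-1), L k
          + ∑ k ∈ Finset.Ioc (2^m+m-1) n, L k = ∑ k ∈ Finset.Ioc 0 n, L k :=
        Finset.sum_Ioc_consecutive L (by omega) h1
      have hblock : ∑ k ∈ Finset.Ioc (2^m+m-1) n, L k = 2*((n - (2^m+m-1) : ℕ) : ℝ) :=
        blocksum _ _ (fun k hk1 hk2 => key m k (by omega) (by omega))
      have hSn : S n = S (2^m+m-1) + 2*((n - (2^m+m-1) : ℕ) : ℝ) := by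
        simp only [hSdef, hIoc]
        rw [← e1, hblock]
      have hmain := main m hm
      have h2mn : (2:ℕ)^m ≤ n := by omega
      have hsm : s^m ≤ Real.sqrt n := hsqrt m n h2mn
      have hc1 : ((n - (2^m+m-1) : ℕ) : ℝ) = (n:ℝ) - ((2:ℝ)^m + m - 1) := by
        have : ((n - (2^m+m-1) : ℕ) : ℝ) = (n:ℝ) - ((2^m+m-1 : ℕ) : ℝ) := by
          rw [Nat.cast_sub h1]
        rw [this]
        congr 1
        push_cast [Nat.cast_sub (show 1 ≤ 2^m+m by omega)]
        ring
      have hc2 : (2:ℝ)^m ≤ (n:ℝ) := by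
        calc (2:ℝ)^m = ((2^m : ℕ) : ℝ) := by push_cast; ring
          _ ≤ (n : ℝ) := by exact_mod_cast h2mn
      rw [hSn, hc1]
      have hm1 : (1:ℝ) ≤ (m:ℝ) := by exact_mod_cast hm
      linarith
    · -- n is exactly the end of the cycle
      have hn_eq : n = 2^(m+1)+(m+1)-1 := le_antisymm h2 hge
      have hmain := main (m+1) (by omega)
      rw [← hn_eq] at hmain
      have h2mn : (2:ℕ)^(m+1) ≤ n := by rw [hn_eq]; omega
      have hsm : s^(m+1) ≤ Real.sqrt n := hsqrt (m+1) n h2mn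
      have hc2 : (2:ℝ)^(m+1) ≤ (n:ℝ) := by
        calc (2:ℝ)^(m+1) = ((2^(m+1) : ℕ) : ℝ) := by push_cast; ring
          _ ≤ (n : ℝ) := by exact_mod_cast h2mn
      linarith
  -- pass to the limsup
  have hf_le : ∀ᶠ (n : ℕ) in atTop,
      (1 / (n : ℝ)) * S n ≤ 3 + 2/(n:ℝ) + 2.5/Real.sqrt n := by
    filter_upwards [eventually_ge_atTop 2] with n hn
    have hn0 : (0:ℝ) < n := by exact_mod_cast (by omega : 0 < n)
    have hsn : (0:ℝ) < Real.sqrt n := Real.sqrt_pos.2 hn0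
    have hb := Sbound n hn
    have hmul : Real.sqrt n * Real.sqrt n = (n:ℝ) := Real.mul_self_sqrt hn0.le
    have hdiv : Real.sqrt n / (n:ℝ) = 1/Real.sqrt n := by
      field_simp
      exact Real.sq_sqrt hn0.le
    have expand : (1/(n:ℝ))*(3*(n:ℝ)+2+2.5*Real.sqrt n)
        = 3 + 2/(n:ℝ) + 2.5*(Real.sqrt n/(n:ℝ)) := by
      field_simp
    calc (1/(n:ℝ)) * S n ≤ (1/(n:ℝ)) * (3*(n:ℝ) + 2 + 2.5*Real.sqrt n) :=
          mul_le_mul_of_nonneg_left hb (by positivity)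
      _ = 3 + 2/(n:ℝ) + 2.5/Real.sqrt n := by
          rw [expand, hdiv]
          ring
  have g_tendsto : Tendsto (fun n:ℕ => 3 + 2/(n:ℝ) + 2.5/Real.sqrt n) atTop (𝓝 3) := by
    have h1 : Tendsto (fun n:ℕ => 2/(n:ℝ)) atTop (𝓝 0) :=
      tendsto_const_div_atTop_nhds_zero_nat 2
    have h2 : Tendsto (fun n:ℕ => 2.5/Real.sqrt n) atTop (𝓝 0) := by
      have h := sqrt_tendsto'.inv_tendsto_atTop
      have := h.const_mul (2.5:ℝ)
      simpa [div_eq_mul_inv] using this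
    have := ((tendsto_const_nhds (x := (3:ℝ)) (f := atTop)).add h1).add h2
    simpa using this
  have hcb : IsCoboundedUnder (· ≤ ·) atTop (fun n : ℕ => (1 / (n : ℝ)) * S n) := by
    apply isCoboundedUnder_le_of_le atTop (x := 0)
    intro n
    have : (0:ℝ) ≤ S n := Finset.sum_nonneg (fun k _ => hnonneg k)
    positivity
  have hbd : IsBoundedUnder (· ≤ ·) atTop (fun n:ℕ => 3 + 2/(n:ℝ) + 2.5/Real.sqrt n) :=
    g_tendsto.isBoundedUnder_le
  rw [hgoal]
  calc Filter.limsup (fun n : ℕ => (1 / (n : ℝ)) * S n) Filter.atTop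
      ≤ Filter.limsup (fun n:ℕ => 3 + 2/(n:ℝ) + 2.5/Real.sqrt n) atTop :=
        limsup_le_limsup hf_le hcb hbd
    _ = 3 := g_tendsto.limsup_eq
end
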